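/- Let A and B be Frobenius algebras, P a coalgebra with a measuring of Frobenius algebras ψ : P ⊗ A → B. Define ψ̄ : P^{cop} ⊗ B → A by ψ̄(p ⊗ b) := e¹ ν_B(ψ(p ⊗ e²) b), where e¹ ⊗ e² = Δ_A(1_A). Then ψ̄ is a measuring of Frobenius algebras from B to A (with respect to the co-opposite coalgebra structure on P). -/

import Mathlib

open TensorProduct
open LinearMap

/-- A Frobenius algebra over `k`: a unital associative `k`-algebra `A` together with a
counital coassociative comultiplication satisfying the Frobenius conditions
`Δ(ab) = a^{(1)} ⊗ a^{(2)}b = ab^{(1)} ⊗ b^{(2)}`. -/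
structure FrobeniusAlgebra (k A : Type*) [CommRing k] [Ring A] [Algebra k A] where
  comul : A →ₗ[k] A ⊗[k] A
  counit : A →ₗ[k] k
  coassoc : ∀ a : A,
    TensorProduct.assoc k A A A
        (TensorProduct.map comul (LinearMap.id : A →ₗ[k] A) (comul a))
      = TensorProduct.map (LinearMap.id : A →ₗ[k] A) comul (comul a)
  counit_left : ∀ a : A,
    TensorProduct.lid k A
        (TensorProduct.map counit (LinearMap.id : A →ₗ[k] A) (comul a)) = a
  counit_right : ∀ a : A,
    TensorProduct.rid k A
        (TensorProduct.map (LinearMap.id : A →ₗ[k] A) counit (comul a)) = a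
  frob_left : ∀ a b : A,
    comul (a * b)
      = TensorProduct.map (LinearMap.mulLeft k a) (LinearMap.id : A →ₗ[k] A) (comul b)
  frob_right : ∀ a b : A,
    comul (a * b)
      = TensorProduct.map (LinearMap.id : A →ₗ[k] A) (LinearMap.mulRight k b) (comul a)

/-- A morphism of Frobenius algebras: a linear map which is simultaneously a morphism of
unital algebras and of counital coalgebras. -/
def IsFrobHom {k A B : Type*} [CommRing k] [Ring A] [Algebra k A] [Ring B] [Algebra k B]
    (FA : FrobeniusAlgebra k A) (FB : FrobeniusAlgebra k B) (h : A →ₗ[k] B) : Prop :=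
  (∀ a a' : A, h (a * a') = h a * h a') ∧ h 1 = 1 ∧
  (∀ a : A, FB.comul (h a) = TensorProduct.map h h (FA.comul a)) ∧
  (∀ a : A, FB.counit (h a) = FA.counit a)


/-- A measuring of Frobenius algebras from `A` to `B`: a coalgebra `(P, δP, εP)` together
with a bilinear map `ψ : P ⊗ A → B` satisfying
`ψ(p ⊗ aa') = ψ(p⁽¹⁾ ⊗ a)ψ(p⁽²⁾ ⊗ a')`, `ψ(p ⊗ 1) = ε(p)1`,
`Δ_B(ψ(p ⊗ a)) = ψ(p⁽¹⁾ ⊗ a⁽¹⁾) ⊗ ψ(p⁽²⁾ ⊗ a⁽²⁾)` and `ν_B(ψ(p ⊗ a)) = ε(p)ν_A(a)`. -/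
def IsFrobMeasuring {k A B P : Type*} [CommRing k] [Ring A] [Algebra k A]
    [Ring B] [Algebra k B] [AddCommGroup P] [Module k P]
    (FA : FrobeniusAlgebra k A) (FB : FrobeniusAlgebra k B)
    (δP : P →ₗ[k] P ⊗[k] P) (εP : P →ₗ[k] k)
    (ψ : P →ₗ[k] A →ₗ[k] B) : Prop :=
  (∀ (p : P) (a a' : A),
      ψ p (a * a')
        = LinearMap.mul' k B
            (TensorProduct.map (ψ.flip a) (ψ.flip a') (δP p))) ∧
  (∀ p : P, ψ p 1 = εP p • (1 : B)) ∧
  (∀ (p : P) (a : A),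
      FB.comul (ψ p a)
        = TensorProduct.map (TensorProduct.lift ψ) (TensorProduct.lift ψ)
            (TensorProduct.tensorTensorTensorComm k P P A A
              (δP p ⊗ₜ[k] FA.comul a))) ∧
  (∀ (p : P) (a : A), FB.counit (ψ p a) = εP p * FA.counit a)

/-- The reversed measuring `ψ̄(p ⊗ b) := e¹ ν_B(ψ(p ⊗ e²) b)` built from the Casimir
element `e¹ ⊗ e² = Δ_A(1)`. -/
noncomputable def frobMeasuringBar {k A B P : Type*} [Field k] [Ring A] [Algebra k A]
    [Ring B] [Algebra k B] [AddCommGroup P] [Module k P]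
    (FA : FrobeniusAlgebra k A) (FB : FrobeniusAlgebra k B)
    (ψ : P →ₗ[k] A →ₗ[k] B) : P →ₗ[k] B →ₗ[k] A :=
  ((dualTensorHom k B A) ∘ₗ
      (TensorProduct.comm k A (Module.Dual k B)).toLinearMap) ∘ₗ
    (LinearMap.applyₗ (FA.comul 1) :
        (A ⊗[k] A →ₗ[k] A ⊗[k] Module.Dual k B) →ₗ[k] A ⊗[k] Module.Dual k B) ∘ₗ
    (TensorProduct.mapBilinear (RingHom.id k) A A A (Module.Dual k B)
        (LinearMap.id : A →ₗ[k] A)) ∘ₗ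
    (LinearMap.llcomp k A B (Module.Dual k B)
        ((LinearMap.llcomp k B B k FB.counit) ∘ₗ (LinearMap.mul k B))) ∘ₗ ψ


section helpers
variable {k C : Type*} [CommRing k] [Ring C] [Algebra k C] (F : FrobeniusAlgebra k C)

example (f : C →ₗ[k] C) : lTensor C f = TensorProduct.map LinearMap.id f := rfl
example (f : C →ₗ[k] C) : rTensor C f = TensorProduct.map f LinearMap.id := rfl

lemma FrobeniusAlgebra.comul_l (x : C) :
    F.comul x = rTensor C (mulLeft k x) (F.comul 1) := by
  have h := F.frob_left x 1; rw [mul_one] at h; exact h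

lemma FrobeniusAlgebra.comul_r (x : C) :
    F.comul x = lTensor C (mulRight k x) (F.comul 1) := by
  have h := F.frob_right 1 x; rw [one_mul] at h; exact h

lemma FrobeniusAlgebra.repro_r (x : C) :
    TensorProduct.rid k C ((lTensor C (F.counit ∘ₗ mulRight k x)) (F.comul 1)) = x := by
  rw [lTensor_comp, LinearMap.comp_apply, ← F.comul_r x]
  exact F.counit_right x

lemma FrobeniusAlgebra.repro_l (x : C) :
    TensorProduct.lid k C ((rTensor C (F.counit ∘ₗ mulLeft k x)) (F.comul 1)) = x := by
  rw [rTensor_comp, LinearMap.comp_apply, ← F.comul_l x]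
  exact F.counit_left x

lemma FrobeniusAlgebra.inj {x y : C} (h : ∀ a : C, F.counit (a * x) = F.counit (a * y)) :
    x = y := by
  have hm : F.counit ∘ₗ mulRight k x = F.counit ∘ₗ mulRight k y := by
    ext a; simpa using h a
  rw [← F.repro_r x, ← F.repro_r y, hm]
end helpers


section bar
variable {k A B P : Type*} [Field k] [Ring A] [Algebra k A]
    [Ring B] [Algebra k B] [AddCommGroup P] [Module k P]
    (FB : FrobeniusAlgebra k B) (ψ : P →ₗ[k] A →ₗ[k] B)

noncomputable def genBar (v : A ⊗[k] A) : P →ₗ[k] B →ₗ[k] A :=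
  ((dualTensorHom k B A) ∘ₗ
      (TensorProduct.comm k A (Module.Dual k B)).toLinearMap) ∘ₗ
    (LinearMap.applyₗ v :
        (A ⊗[k] A →ₗ[k] A ⊗[k] Module.Dual k B) →ₗ[k] A ⊗[k] Module.Dual k B) ∘ₗ
    (TensorProduct.mapBilinear (RingHom.id k) A A A (Module.Dual k B)
        (LinearMap.id : A →ₗ[k] A)) ∘ₗ
    (LinearMap.llcomp k A B (Module.Dual k B)
        ((LinearMap.llcomp k B B k FB.counit) ∘ₗ (LinearMap.mul k B))) ∘ₗ ψ

lemma frobMeasuringBar_eq_genBar (FA : FrobeniusAlgebra k A) :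
    frobMeasuringBar FA FB ψ = genBar FB ψ (FA.comul 1) := rfl

lemma genBar_add (u w : A ⊗[k] A) :
    genBar FB ψ (u + w) = genBar FB ψ u + genBar FB ψ w := by
  unfold genBar; ext p c
  simp [map_add]

lemma genBar_apply (v : A ⊗[k] A) (p : P) (c : B) :
    genBar FB ψ v p c
      = TensorProduct.rid k A
          ((lTensor A ((FB.counit ∘ₗ mulRight k c) ∘ₗ ψ p)) v) := by
  induction v using TensorProduct.induction_on with
  | zero => simp [genBar]
  | tmul x y => simp [genBar, TensorProduct.mapBilinear_apply, mul_comm]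
  | add u w hu hw => simp only [genBar, LinearMap.comp_apply, TensorProduct.mapBilinear_apply, LinearEquiv.coe_coe, LinearMap.applyₗ_apply_apply] at hu hw ⊢; simp [map_add, hu, hw]
end bar

section pure
variable {k C M : Type*} [CommRing k] [Ring C] [Algebra k C]

lemma P1 (v : C ⊗[k] C) (g : C →ₗ[k] k) (a : C) :
    a * TensorProduct.rid k C (lTensor C g v)
      = TensorProduct.rid k C (lTensor C g (rTensor C (mulLeft k a) v)) := by
  induction v using TensorProduct.induction_on with
  | zero => simp
  | tmul x y => simp [mul_smul_comm]
  | add u w hu hw => simp [map_add, mul_add, hu, hw]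

lemma lift_add' {M N Q : Type*} [AddCommGroup M] [AddCommGroup N] [AddCommGroup Q]
    [Module k M] [Module k N] [Module k Q] (F G : M →ₗ[k] N →ₗ[k] Q) :
    TensorProduct.lift (F + G) = TensorProduct.lift F + TensorProduct.lift G := by
  apply TensorProduct.ext'; intro x y; simp

lemma lift_zero' {M N Q : Type*} [AddCommGroup M] [AddCommGroup N] [AddCommGroup Q]
    [Module k M] [Module k N] [Module k Q] :
    TensorProduct.lift (0 : M →ₗ[k] N →ₗ[k] Q) = 0 := by
  apply TensorProduct.ext'; intro x y; simp

lemma P3 (v : C ⊗[k] C) (g h : C →ₗ[k] k) :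
    h (TensorProduct.rid k C (lTensor C g v))
      = g (TensorProduct.lid k C (rTensor C h v)) := by
  induction v using TensorProduct.induction_on with
  | zero => simp
  | tmul x y => simp [mul_comm]
  | add u w hu hw => simp [map_add, hu, hw]
end pure

section meas
variable {k A B P : Type*} [Field k] [Ring A] [Algebra k A]
    [Ring B] [Algebra k B] [AddCommGroup P] [Module k P]
    (FA : FrobeniusAlgebra k A) (FB : FrobeniusAlgebra k B)
    (δP : P →ₗ[k] P ⊗[k] P) (εP : P →ₗ[k] k) (ψ : P →ₗ[k] A →ₗ[k] B)

lemma bar_adj (p : P) (a : A) (b : B) :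
    FA.counit (a * frobMeasuringBar FA FB ψ p b)
      = FB.counit (ψ p a * b) := by
  rw [frobMeasuringBar_eq_genBar, genBar_apply, P1, ← FA.comul_l a, FA.comul_r a,
    ← LinearMap.comp_apply (lTensor A _), ← lTensor_comp, P3]
  have h1 : TensorProduct.lid k A (rTensor A FA.counit (FA.comul 1)) = 1 :=
    FA.counit_left 1
  rw [h1]
  simp

lemma bar_one (hν : ∀ (p : P) (a : A), FB.counit (ψ p a) = εP p * FA.counit a) (p : P) :
    frobMeasuringBar FA FB ψ p 1 = εP p • (1 : A) := by
  rw [frobMeasuringBar_eq_genBar, genBar_apply]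
  have h2 : (FB.counit ∘ₗ mulRight k (1 : B)) ∘ₗ ψ p = εP p • FA.counit := by
    ext a; simp [hν]
  rw [h2]
  have h3 : lTensor A (εP p • FA.counit) (FA.comul 1)
      = εP p • lTensor A FA.counit (FA.comul 1) := by
    rw [lTensor_smul]; rfl
  rw [h3, map_smul]
  congr 1
  exact FA.counit_right 1

lemma bar_counit (hone : ∀ p : P, ψ p 1 = εP p • (1 : B)) (p : P) (b : B) :
    FA.counit (frobMeasuringBar FA FB ψ p b) = εP p * FB.counit b := by
  rw [frobMeasuringBar_eq_genBar, genBar_apply, P3]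
  have h1 : TensorProduct.lid k A (rTensor A FA.counit (FA.comul 1)) = 1 :=
    FA.counit_left 1
  rw [h1]
  simp [hone, smul_mul_assoc]

lemma lemK
    (hcomul : ∀ (p : P) (a : A), FB.comul (ψ p a)
      = TensorProduct.map (TensorProduct.lift ψ) (TensorProduct.lift ψ)
          (TensorProduct.tensorTensorTensorComm k P P A A (δP p ⊗ₜ[k] FA.comul a)))
    (hone : ∀ p : P, ψ p 1 = εP p • (1 : B)) (q : P) (b : B) :
    TensorProduct.lift (ψ.compl₂ ((frobMeasuringBar FA FB ψ).flip b)) (δP q)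
      = εP q • b := by
  have PK : ∀ u : P ⊗[k] P,
      TensorProduct.lift (ψ.compl₂ ((frobMeasuringBar FA FB ψ).flip b)) u
        = TensorProduct.rid k B (lTensor B (FB.counit ∘ₗ mulRight k b)
            (TensorProduct.map (TensorProduct.lift ψ) (TensorProduct.lift ψ)
              (TensorProduct.tensorTensorTensorComm k P P A A (u ⊗ₜ[k] FA.comul 1)))) := by
    intro u
    induction u using TensorProduct.induction_on with
    | zero => simp
    | tmul s t =>
      have sub : ∀ v : A ⊗[k] A,
          ψ s (genBar FB ψ v t b)
            = TensorProduct.rid k B (lTensor B (FB.counit ∘ₗ mulRight k b)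
                (TensorProduct.map (TensorProduct.lift ψ) (TensorProduct.lift ψ)
                  (TensorProduct.tensorTensorTensorComm k P P A A ((s ⊗ₜ[k] t) ⊗ₜ[k] v)))) := by
        intro v
        induction v using TensorProduct.induction_on with
        | zero => simp [genBar]
        | tmul x y => rw [genBar_apply]; simp
        | add u' w' hu hw =>
            simp only [genBar_add, LinearMap.add_apply, map_add, TensorProduct.tmul_add, hu, hw]
      simpa [frobMeasuringBar_eq_genBar] using sub (FA.comul 1)
    | add u' w' hu hw => simp only [map_add, TensorProduct.add_tmul, hu, hw]
  rw [PK (δP q), ← hcomul q 1, hone q, map_smul, map_smul, map_smul]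
  congr 1
  exact FB.repro_r b

lemma bar_mul
    (hmul : ∀ (p : P) (a a' : A), ψ p (a * a')
      = LinearMap.mul' k B (TensorProduct.map (ψ.flip a) (ψ.flip a') (δP p)))
    (hcomul : ∀ (p : P) (a : A), FB.comul (ψ p a)
      = TensorProduct.map (TensorProduct.lift ψ) (TensorProduct.lift ψ)
          (TensorProduct.tensorTensorTensorComm k P P A A (δP p ⊗ₜ[k] FA.comul a)))
    (hone : ∀ p : P, ψ p 1 = εP p • (1 : B))
    (hcoassoc : ∀ p : P,
      TensorProduct.assoc k P P P
          (TensorProduct.map δP (LinearMap.id : P →ₗ[k] P) (δP p))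
        = TensorProduct.map (LinearMap.id : P →ₗ[k] P) δP (δP p))
    (hcounitr : ∀ p : P,
      TensorProduct.rid k P
          (TensorProduct.map (LinearMap.id : P →ₗ[k] P) εP (δP p)) = p)
    (p : P) (b b' : B) :
    frobMeasuringBar FA FB ψ p (b * b')
      = LinearMap.mul' k A
          (TensorProduct.map ((frobMeasuringBar FA FB ψ).flip b)
            ((frobMeasuringBar FA FB ψ).flip b')
            ((TensorProduct.comm k P P) (δP p))) := by
  set ψb := frobMeasuringBar FA FB ψ with hψb
  set φ' : B →ₗ[k] k := FB.counit ∘ₗ mulRight k b' with hφ'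
  set Kbil : P →ₗ[k] P →ₗ[k] B := ψ.compl₂ (ψb.flip b) with hKbil
  apply FA.inj
  intro a
  -- LHS
  rw [bar_adj]
  -- RHS : step 1
  have Λ : P →ₗ[k] P →ₗ[k] k := ((llcomp k A B k φ') ∘ₗ ψ).compl₂ (mulLeft k a ∘ₗ ψb.flip b)
  set J1 : P ⊗[k] P →ₗ[k] k :=
    TensorProduct.lift (((llcomp k A B k φ') ∘ₗ ψ).compl₂ (mulLeft k a ∘ₗ ψb.flip b)) with hJ1
  have step1 : ∀ u : P ⊗[k] P,
      FA.counit (a * LinearMap.mul' k A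
        (TensorProduct.map (ψb.flip b) (ψb.flip b') ((TensorProduct.comm k P P) u)))
        = J1 u := by
    intro u
    induction u using TensorProduct.induction_on with
    | zero => simp [hJ1]
    | tmul s t =>
      rw [TensorProduct.comm_tmul, TensorProduct.map_tmul, LinearMap.mul'_apply,
        ← mul_assoc]
      rw [show (ψb.flip b) t = ψb t b from rfl, show (ψb.flip b') s = ψb s b' from rfl,
        hψb, bar_adj]
      simp [hJ1, hφ', hψb]
    | add u w hu hw => simp only [map_add, mul_add, ← hu, ← hw]
  rw [step1 (δP p)]
  -- step 2
  set J2 : (P ⊗[k] P) ⊗[k] P →ₗ[k] k :=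
    TensorProduct.lift (LinearMap.mk₂ k
      (fun v t => φ' (LinearMap.mul' k B
        (TensorProduct.map (ψ.flip a) (Kbil.flip t) v)))
      (by intros; simp [map_add])
      (by intros; simp)
      (by intros; simp [TensorProduct.map_add_right, map_add])
      (by intros; simp [TensorProduct.map_smul_right, map_smul])) with hJ2
  have step2 : ∀ u : P ⊗[k] P, J1 u = J2 (rTensor P δP u) := by
    intro u
    induction u using TensorProduct.induction_on with
    | zero => simp [hJ1, hJ2]
    | tmul s t =>
      have e1 : J1 (s ⊗ₜ[k] t) = φ' (ψ s (a * ψb t b)) := by simp [hJ1]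
      have e2 : ψ.flip (ψb t b) = Kbil.flip t := rfl
      rw [e1, hmul s a (ψb t b), e2]
      simp [hJ2]
    | add u w hu hw => simp only [map_add, hu, hw]
  rw [step2 (δP p)]
  -- step 3 : coassociativity
  have step3 : rTensor P δP (δP p)
      = (TensorProduct.assoc k P P P).symm (lTensor P δP (δP p)) := by
    rw [show lTensor P δP (δP p)
        = TensorProduct.map (LinearMap.id : P →ₗ[k] P) δP (δP p) from rfl,
      ← hcoassoc p]
    rw [show rTensor P δP (δP p)
        = TensorProduct.map δP (LinearMap.id : P →ₗ[k] P) (δP p) from rfl]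
    simp
  rw [step3]
  -- step 4 : key lemma K
  set J4 : P ⊗[k] P →ₗ[k] k :=
    TensorProduct.lift (LinearMap.mk₂ k
      (fun x w => εP w * φ' (ψ x a * b))
      (by intros x y z; simp only [map_add, LinearMap.add_apply, add_mul, mul_add]
          try ring)
      (by intros c x y; simp only [map_smul, LinearMap.smul_apply, smul_mul_assoc,
            smul_eq_mul]; ring)
      (by intros x y z; simp only [map_add, LinearMap.add_apply, add_mul, mul_add]
          try ring)
      (by intros c x y; simp only [map_smul, LinearMap.smul_apply, smul_mul_assoc,
            smul_eq_mul]; ring)) with hJ4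
  have step4 : ∀ u : P ⊗[k] P,
      J2 ((TensorProduct.assoc k P P P).symm (lTensor P δP u)) = J4 u := by
    intro u
    induction u using TensorProduct.induction_on with
    | zero => simp [hJ2, hJ4]
    | tmul x w =>
      have sub : ∀ v : P ⊗[k] P,
          J2 ((TensorProduct.assoc k P P P).symm (x ⊗ₜ[k] v))
            = φ' (ψ x a * TensorProduct.lift Kbil v) := by
        intro v
        induction v using TensorProduct.induction_on with
        | zero => simp [hJ2]
        | tmul y z => simp [hJ2, hKbil]
        | add v1 v2 h1 h2 => simp only [TensorProduct.tmul_add, map_add, h1, h2, mul_add]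
      rw [lTensor_tmul, sub (δP w), hKbil,
        lemK FA FB δP εP ψ hcomul hone w b]
      simp [hJ4, mul_comm]
    | add u w hu hw => simp only [map_add, hu, hw]
  rw [step4 (δP p)]
  -- step 5 : counit
  have step5 : ∀ u : P ⊗[k] P,
      J4 u = φ' (ψ (TensorProduct.rid k P (lTensor P εP u)) a * b) := by
    intro u
    induction u using TensorProduct.induction_on with
    | zero => simp [hJ4]
    | tmul x w => simp [hJ4, smul_mul_assoc]
    | add u w hu hw =>
        simp only [map_add, hu, hw, LinearMap.add_apply, add_mul, mul_add]
  rw [step5 (δP p),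
    show lTensor P εP (δP p)
      = TensorProduct.map (LinearMap.id : P →ₗ[k] P) εP (δP p) from rfl,
    hcounitr p]
  simp [hφ', mul_assoc]

lemma Ra_pure (s t : P) (b : B) :
    TensorProduct.map (TensorProduct.lift (frobMeasuringBar FA FB ψ))
        (TensorProduct.lift (frobMeasuringBar FA FB ψ))
        (TensorProduct.tensorTensorTensorComm k P P B B
          ((t ⊗ₜ[k] s) ⊗ₜ[k] FB.comul b))
      = lTensor A ((frobMeasuringBar FA FB ψ) s ∘ₗ (mulRight k b ∘ₗ ψ t))
          (FA.comul 1) := by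
  set ψb := frobMeasuringBar FA FB ψ with hψb
  set e := FA.comul 1 with he
  set f := FB.comul 1 with hf
  rw [show FB.comul b = lTensor B (mulRight k b) f from FB.comul_r b]
  have sub₁ : ∀ w : B ⊗[k] B,
      TensorProduct.map (TensorProduct.lift ψb) (TensorProduct.lift ψb)
          (TensorProduct.tensorTensorTensorComm k P P B B
            ((t ⊗ₜ[k] s) ⊗ₜ[k] (lTensor B (mulRight k b) w)))
        = TensorProduct.lift
            (((TensorProduct.mk k A A) ∘ₗ (ψb t)).compl₂ (ψb s ∘ₗ mulRight k b)) w := by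
    intro w
    induction w using TensorProduct.induction_on with
    | zero => simp
    | tmul c d => simp
    | add w₁ w₂ h₁ h₂ => simp only [map_add, TensorProduct.tmul_add, h₁, h₂]
  rw [sub₁ f]
  set G1 : B →ₗ[k] A →ₗ[k] k :=
    ((llcomp k A B k).flip (ψ t)) ∘ₗ (llcomp k B B k FB.counit) ∘ₗ (mul k B).flip with hG1
  have hG1c : ∀ c : B, G1 c = (FB.counit ∘ₗ mulRight k c) ∘ₗ ψ t := by
    intro c; ext z; simp [hG1, LinearMap.mul_apply']
  set barfst : A ⊗[k] A → (B →ₗ[k] A) := fun v =>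
    ((TensorProduct.rid k A).toLinearMap) ∘ₗ (LinearMap.applyₗ v) ∘ₗ
      (LinearMap.lTensorHom A) ∘ₗ G1 with hbarfst
  have hbarfstc : ∀ (v : A ⊗[k] A) (c : B),
      barfst v c = TensorProduct.rid k A (lTensor A (G1 c) v) := by
    intro v c; simp [hbarfst, LinearMap.coe_lTensorHom]
  have claima : ((TensorProduct.mk k A A) ∘ₗ (ψb t)).compl₂ (ψb s ∘ₗ mulRight k b)
      = ((TensorProduct.mk k A A) ∘ₗ (barfst e)).compl₂ (ψb s ∘ₗ mulRight k b) := by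
    apply LinearMap.ext; intro c; apply LinearMap.ext; intro d
    simp only [LinearMap.compl₂_apply, LinearMap.comp_apply]
    congr 1
    rw [hbarfstc e c, hG1c c, hψb, frobMeasuringBar_eq_genBar, genBar_apply, ← he]
  rw [claima]
  have claimb : ∀ v : A ⊗[k] A,
      TensorProduct.lift
          (((TensorProduct.mk k A A) ∘ₗ (barfst v)).compl₂ (ψb s ∘ₗ mulRight k b)) f
        = lTensor A (ψb s ∘ₗ (mulRight k b ∘ₗ ψ t)) v := by
    intro v
    induction v using TensorProduct.induction_on with
    | zero =>
      have h0 : ((TensorProduct.mk k A A) ∘ₗ (barfst 0)).compl₂ (ψb s ∘ₗ mulRight k b)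
          = 0 := by
        apply LinearMap.ext; intro c; apply LinearMap.ext; intro d
        simp [hbarfstc]
      rw [h0, lift_zero']; simp
    | tmul x y =>
      have subsub : ∀ w : B ⊗[k] B,
          TensorProduct.lift
              (((TensorProduct.mk k A A) ∘ₗ (barfst (x ⊗ₜ[k] y))).compl₂
                (ψb s ∘ₗ mulRight k b)) w
            = x ⊗ₜ[k] (ψb s
                ((TensorProduct.lid k B
                  (rTensor B (FB.counit ∘ₗ mulLeft k (ψ t y)) w)) * b)) := by
        intro w
        induction w using TensorProduct.induction_on with
        | zero => simp
        | tmul c d =>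
          simp [hbarfstc, hG1c, TensorProduct.smul_tmul, smul_mul_assoc]
        | add w₁ w₂ h₁ h₂ =>
          simp only [map_add, h₁, h₂, add_mul, TensorProduct.tmul_add]
      rw [subsub f, FB.repro_l (ψ t y)]
      simp
    | add v₁ v₂ h₁ h₂ =>
      have hadd : ((TensorProduct.mk k A A) ∘ₗ (barfst (v₁ + v₂))).compl₂
            (ψb s ∘ₗ mulRight k b)
          = ((TensorProduct.mk k A A) ∘ₗ (barfst v₁)).compl₂ (ψb s ∘ₗ mulRight k b)
            + ((TensorProduct.mk k A A) ∘ₗ (barfst v₂)).compl₂ (ψb s ∘ₗ mulRight k b) := by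
        apply LinearMap.ext; intro c; apply LinearMap.ext; intro d
        simp [hbarfstc, map_add, TensorProduct.add_tmul]
      rw [hadd, lift_add']
      simp only [LinearMap.add_apply, h₁, h₂, map_add]
  exact claimb e

set_option maxHeartbeats 1000000 in
set_option synthInstance.maxHeartbeats 200000 in
lemma bar_comul
    (hmul : ∀ (p : P) (a a' : A), ψ p (a * a')
      = LinearMap.mul' k B (TensorProduct.map (ψ.flip a) (ψ.flip a') (δP p)))
    (p : P) (b : B) :
    FA.comul (frobMeasuringBar FA FB ψ p b)
      = TensorProduct.map (TensorProduct.lift (frobMeasuringBar FA FB ψ))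
          (TensorProduct.lift (frobMeasuringBar FA FB ψ))
          (TensorProduct.tensorTensorTensorComm k P P B B
            ((TensorProduct.comm k P P (δP p)) ⊗ₜ[k] FB.comul b)) := by
  set ψb := frobMeasuringBar FA FB ψ with hψb
  set e := FA.comul 1 with he
  set θ : A →ₗ[k] k := (FB.counit ∘ₗ mulRight k b) ∘ₗ ψ p with hθ
  set Ωg : A ⊗[k] A →ₗ[k] k :=
    θ ∘ₗ LinearMap.mul' k A ∘ₗ (TensorProduct.comm k A A).toLinearMap with hΩg
  set Ωf : A ⊗[k] A → A ⊗[k] A → A ⊗[k] A := fun u v =>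
    TensorProduct.rid k (A ⊗[k] A)
      (lTensor (A ⊗[k] A) Ωg (TensorProduct.tensorTensorTensorComm k A A A A
        (u ⊗ₜ[k] v))) with hΩf
  -- Part L --
  have L1 : ψb p b = TensorProduct.rid k A (lTensor A θ e) := by
    rw [hθ, he, hψb, frobMeasuringBar_eq_genBar, genBar_apply]
  have PL1 : ∀ u : A ⊗[k] A,
      FA.comul (TensorProduct.rid k A (lTensor A θ u))
        = TensorProduct.rid k (A ⊗[k] A)
            (lTensor (A ⊗[k] A) θ (rTensor A FA.comul u)) := by
    intro u
    induction u using TensorProduct.induction_on with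
    | zero => simp
    | tmul x y => simp
    | add u w hu hw => simp only [map_add, hu, hw]
  have L3 : rTensor A FA.comul e
      = (TensorProduct.assoc k A A A).symm (lTensor A FA.comul e) := by
    have h := FA.coassoc 1
    rw [he, show (rTensor A FA.comul : A ⊗[k] A →ₗ[k] (A ⊗[k] A) ⊗[k] A)
        = TensorProduct.map FA.comul LinearMap.id from rfl,
      show (lTensor A FA.comul : A ⊗[k] A →ₗ[k] A ⊗[k] (A ⊗[k] A))
        = TensorProduct.map LinearMap.id FA.comul from rfl, ← h]
    simp
  set Dmv : A ⊗[k] A → (A →ₗ[k] A ⊗[k] A) := fun v =>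
    (LinearMap.applyₗ v) ∘ₗ (LinearMap.lTensorHom A) ∘ₗ (mul k A).flip with hDmv
  have hDmvc : ∀ (v : A ⊗[k] A) (x : A), Dmv v x = lTensor A ((mul k A).flip x) v := by
    intro v x; simp [hDmv, LinearMap.coe_lTensorHom]
  have hDm : FA.comul = Dmv e := by
    ext x
    have h2 : ((mul k A).flip x) = mulRight k x := by
      ext z; simp [LinearMap.mul_apply']
    rw [hDmvc e x, h2, he]
    exact FA.comul_r x
  have PX : ∀ u v : A ⊗[k] A,
      TensorProduct.rid k (A ⊗[k] A)
          (lTensor (A ⊗[k] A) θ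
            ((TensorProduct.assoc k A A A).symm (lTensor A (Dmv v) u))) = Ωf u v := by
    intro u v
    induction u using TensorProduct.induction_on with
    | zero => simp [hΩf]
    | tmul x y =>
      induction v using TensorProduct.induction_on with
      | zero => simp [hΩf, hDmvc]
      | tmul c d => simp [hΩf, hDmvc, hΩg, LinearMap.mul_apply']
      | add v₁ v₂ h₁ h₂ =>
        have hDadd : Dmv (v₁ + v₂) = Dmv v₁ + Dmv v₂ := by
          ext z; simp [hDmvc, map_add]
        simp only [hDadd, lTensor_add, LinearMap.add_apply, map_add, h₁, h₂, hΩf,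
          TensorProduct.tmul_add]
    | add u₁ u₂ h₁ h₂ =>
      simp only [map_add, h₁, h₂, hΩf, TensorProduct.add_tmul]
  have PartL : FA.comul (ψb p b) = Ωf e e := by
    rw [L1, PL1 e, L3,
      show lTensor A FA.comul e = lTensor A (Dmv e) e from by rw [← hDm]]
    exact PX e e
  -- Part R --
  set hbil : P →ₗ[k] P →ₗ[k] (A →ₗ[k] A) :=
    ((llcomp k A B A) ∘ₗ ψb).compl₂ ((llcomp k A B B (mulRight k b)) ∘ₗ ψ) with hhbil
  have hbilc : ∀ s t : P, hbil s t = ψb s ∘ₗ (mulRight k b ∘ₗ ψ t) := by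
    intro s t; ext z; simp [hhbil]
  set cbilv : A ⊗[k] A → (P →ₗ[k] P →ₗ[k] A ⊗[k] A) := fun v =>
    hbil.compr₂ ((LinearMap.applyₗ v) ∘ₗ (LinearMap.lTensorHom A)) with hcbilv
  have cbilvc : ∀ (v : A ⊗[k] A) (s t : P),
      cbilv v s t = lTensor A (hbil s t) v := by
    intro v s t; simp [hcbilv, LinearMap.coe_lTensorHom]
  have Ra : ∀ u : P ⊗[k] P,
      TensorProduct.map (TensorProduct.lift ψb) (TensorProduct.lift ψb)
          (TensorProduct.tensorTensorTensorComm k P P B B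
            ((TensorProduct.comm k P P u) ⊗ₜ[k] FB.comul b))
        = TensorProduct.lift (cbilv e) u := by
    intro u
    induction u using TensorProduct.induction_on with
    | zero => simp
    | tmul s t =>
      rw [TensorProduct.comm_tmul, hψb, he]
      rw [Ra_pure FA FB ψ s t b]
      rw [TensorProduct.lift.tmul, cbilvc, hbilc, ← hψb, ← he]
    | add u₁ u₂ h₁ h₂ =>
      simp only [map_add, TensorProduct.add_tmul, h₁, h₂]
  have lift_cbilv : ∀ v : A ⊗[k] A,
      TensorProduct.lift (cbilv v) (δP p)
        = lTensor A (TensorProduct.lift hbil (δP p)) v := by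
    intro v
    rw [hcbilv, TensorProduct.lift_compr₂]
    simp [LinearMap.coe_lTensorHom]
  set Dmap : A →ₗ[k] A := TensorProduct.lift hbil (δP p) with hDmap
  have K2 : ∀ y : A,
      Dmap y = TensorProduct.rid k A (lTensor A (θ ∘ₗ mulRight k y) e) := by
    intro y
    have h1 : Dmap y = TensorProduct.lift (hbil.compr₂ (LinearMap.applyₗ y)) (δP p) := by
      rw [TensorProduct.lift_compr₂]; simp [hDmap]
    have h2 : hbil.compr₂ (LinearMap.applyₗ y)
        = (genBar FB ψ e).compl₂ (mulRight k b ∘ₗ ψ.flip y) := by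
      apply LinearMap.ext; intro s; apply LinearMap.ext; intro t
      simp only [LinearMap.compr₂_apply, LinearMap.applyₗ_apply_apply,
        LinearMap.compl₂_apply, LinearMap.comp_apply, LinearMap.flip_apply]
      rw [hbilc]
      rw [show genBar FB ψ e = ψb from by rw [hψb, frobMeasuringBar_eq_genBar, he]]
      simp
    rw [h1, h2]
    have K2core : ∀ v : A ⊗[k] A,
        TensorProduct.lift ((genBar FB ψ v).compl₂ (mulRight k b ∘ₗ ψ.flip y)) (δP p)
          = TensorProduct.rid k A (lTensor A (θ ∘ₗ mulRight k y) v) := by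
      intro v
      induction v using TensorProduct.induction_on with
      | zero =>
        have h0 : ((genBar FB ψ (0 : A ⊗[k] A)).compl₂
            (mulRight k b ∘ₗ ψ.flip y)) = 0 := by
          apply LinearMap.ext; intro s; apply LinearMap.ext; intro t
          rw [LinearMap.compl₂_apply, genBar_apply]; simp
        rw [h0, lift_zero']; simp
      | tmul c d =>
        have sub : ∀ u : P ⊗[k] P,
            TensorProduct.lift ((genBar FB ψ (c ⊗ₜ[k] d)).compl₂
                (mulRight k b ∘ₗ ψ.flip y)) u
              = FB.counit ((LinearMap.mul' k B
                  (TensorProduct.map (ψ.flip d) (ψ.flip y) u)) * b) • c := by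
          intro u
          induction u using TensorProduct.induction_on with
          | zero => simp
          | tmul s t =>
            rw [TensorProduct.lift.tmul, LinearMap.compl₂_apply, genBar_apply]
            simp [mul_assoc]
          | add u₁ u₂ h₁ h₂ => simp only [map_add, h₁, h₂, add_mul, add_smul]
        rw [sub (δP p), ← hmul p d y]
        simp [hθ]
      | add v₁ v₂ h₁ h₂ =>
        have hadd : ((genBar FB ψ (v₁ + v₂)).compl₂ (mulRight k b ∘ₗ ψ.flip y))
            = ((genBar FB ψ v₁).compl₂ (mulRight k b ∘ₗ ψ.flip y))
              + ((genBar FB ψ v₂).compl₂ (mulRight k b ∘ₗ ψ.flip y)) := by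
          rw [genBar_add]; rfl
        rw [hadd, lift_add']
        simp only [LinearMap.add_apply, h₁, h₂, map_add]
    exact K2core e
  set Dv : A ⊗[k] A → (A →ₗ[k] A) := fun v =>
    ((TensorProduct.rid k A).toLinearMap) ∘ₗ (LinearMap.applyₗ v) ∘ₗ
      (LinearMap.lTensorHom A) ∘ₗ (llcomp k A A k θ) ∘ₗ (mul k A).flip with hDv
  have hDvc : ∀ (v : A ⊗[k] A) (y : A),
      Dv v y = TensorProduct.rid k A (lTensor A (θ ∘ₗ ((mul k A).flip y)) v) := by
    intro v y
    simp only [hDv, LinearMap.coe_comp, Function.comp_apply, LinearMap.coe_lTensorHom,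
      LinearMap.applyₗ_apply_apply, LinearEquiv.coe_coe]
    rfl
  have hDe : Dmap = Dv e := by
    ext y
    rw [K2 y, hDvc e y]
    have hfl : θ ∘ₗ ((mul k A).flip y) = θ ∘ₗ mulRight k y := by
      ext z; simp [LinearMap.mul_apply']
    rw [hfl]
  have PW : ∀ u v : A ⊗[k] A, lTensor A (Dv v) u = Ωf u v := by
    intro u v
    induction u using TensorProduct.induction_on with
    | zero => simp [hΩf]
    | tmul x y =>
      induction v using TensorProduct.induction_on with
      | zero => simp [hΩf, hDvc]
      | tmul c d => simp [hΩf, hDvc, hΩg, LinearMap.mul_apply']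
      | add v₁ v₂ h₁ h₂ =>
        have hDadd : Dv (v₁ + v₂) = Dv v₁ + Dv v₂ := by
          ext z; simp [hDvc, map_add]
        simp only [hDadd, lTensor_add, LinearMap.add_apply, h₁, h₂, hΩf,
          TensorProduct.tmul_add, map_add]
    | add u₁ u₂ h₁ h₂ =>
      simp only [map_add, h₁, h₂, hΩf, TensorProduct.add_tmul]
  calc FA.comul (ψb p b) = Ωf e e := PartL
    _ = lTensor A (Dv e) e := (PW e e).symm
    _ = lTensor A Dmap e := by rw [hDe]
    _ = TensorProduct.lift (cbilv e) (δP p) := (lift_cbilv e).symm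
    _ = _ := (Ra (δP p)).symm
end meas


/-- If `(P, ψ)` is a measuring of Frobenius algebras from `A` to `B`, then
`ψ̄(p ⊗ b) = e¹ ν_B(ψ(p ⊗ e²) b)` is a measuring of Frobenius algebras from `B` to `A`
with respect to the co-opposite coalgebra structure on `P`. -/
theorem frobMeasuringBar_isMeasuring {k A B P : Type*} [Field k] [Ring A] [Algebra k A]
    [Ring B] [Algebra k B] [AddCommGroup P] [Module k P]
    (FA : FrobeniusAlgebra k A) (FB : FrobeniusAlgebra k B)
    (δP : P →ₗ[k] P ⊗[k] P) (εP : P →ₗ[k] k)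
    (hcoassoc : ∀ p : P,
      TensorProduct.assoc k P P P
          (TensorProduct.map δP (LinearMap.id : P →ₗ[k] P) (δP p))
        = TensorProduct.map (LinearMap.id : P →ₗ[k] P) δP (δP p))
    (hcounitl : ∀ p : P,
      TensorProduct.lid k P
          (TensorProduct.map εP (LinearMap.id : P →ₗ[k] P) (δP p)) = p)
    (hcounitr : ∀ p : P,
      TensorProduct.rid k P
          (TensorProduct.map (LinearMap.id : P →ₗ[k] P) εP (δP p)) = p)
    (ψ : P →ₗ[k] A →ₗ[k] B) (hψ : IsFrobMeasuring FA FB δP εP ψ) :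
    IsFrobMeasuring FB FA
      ((TensorProduct.comm k P P).toLinearMap ∘ₗ δP) εP
      (frobMeasuringBar FA FB ψ) := by
  obtain ⟨hmul, hone, hcomul, hν⟩ := hψ
  refine ⟨?_, ?_, ?_, ?_⟩
  · intro p b b'
    simpa using bar_mul FA FB δP εP ψ hmul hcomul hone hcoassoc hcounitr p b b'
  · intro p
    exact bar_one FA FB εP ψ hν p
  · intro p a
    simpa using bar_comul FA FB δP ψ hmul p a
  · intro p a
    exact bar_counit FA FB εP ψ hone p a
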